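/- arXiv:1310.5469 — 2 statements merged into one kernel-verified Lean document; each statement's English description precedes it below -/
import Mathlib

section
/- Let G be a connected graph with a square root H. Let r ≥ 3 and let {u_1, ..., u_r} be a clique in G such that {u_1, u_2} is a minimal ({u_3, ..., u_r}, V_G ∖ {u_1, ..., u_r})-separator of G. Let {x_1, ..., x_p} = N_G(u_1) ∖ {u_1, ..., u_r} with p ≥ 1 and {y_1, ..., y_q} = N_G(u_2) ∖ {u_1, ..., u_r} with q ≥ 1. Then u_1u_2 ∈ E_H, and either (a) u_3u_1, ..., u_ru_1 ∈ E_H, u_3u_2, ..., u_ru_2 ∉ E_H, u_1x_1, ..., u_1x_p ∉ E_H, and {u_2} is a minimal ({u_1, u_3, ..., u_r}, V_H ∖ {u_1, ..., u_r})-separator of H, or (b) u_3u_1, ..., u_ru_1 ∉ E_H, u_3u_2, ..., u_ru_2 ∈ E_H, u_2y_1, ..., u_2y_q ∉ E_H, and {u_1} is a minimal ({u_2, ..., u_r}, V_H ∖ {u_1, ..., u_r})-separator of H. -/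
open SimpleGraph

variable {V : Type*}

/-- The square of a graph `H`: two distinct vertices are adjacent iff
their distance in `H` is at most `2`, i.e. they are adjacent in `H` or
have a common neighbor in `H`. -/
def squareGraph (H : SimpleGraph V) : SimpleGraph V where
  Adj a b := a ≠ b ∧ (H.Adj a b ∨ ∃ w, H.Adj a w ∧ H.Adj w b)
  symm := ⟨by
    rintro a b ⟨hne, h | ⟨w, h1, h2⟩⟩
    · exact ⟨hne.symm, Or.inl h.symm⟩
    · exact ⟨hne.symm, Or.inr ⟨w, h2.symm, h1.symm⟩⟩⟩
  loopless := ⟨by rintro a ⟨hne, -⟩; exact hne rfl⟩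

/-- `H` is a square root of `G` if `H² = G`. -/
def IsSquareRoot (H G : SimpleGraph V) : Prop := squareGraph H = G

/-- A pendant vertex: a vertex with exactly one neighbor (degree 1). -/
def IsPendant (H : SimpleGraph V) (u : V) : Prop := ∃! w, H.Adj u w

/-- The closed neighborhood of a vertex. -/
def closedNbhd (G : SimpleGraph V) (u : V) : Set V := insert u (G.neighborSet u)

/-- Two vertices are true twins if their closed neighborhoods coincide. -/
def TrueTwins (G : SimpleGraph V) (u v : V) : Prop := closedNbhd G u = closedNbhd G v

/-- `S` is an `(X,Y)`-separator of `G`: every walk in `G` from a vertex of `X`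
to a vertex of `Y` meets `S`, i.e. there is no path connecting `X` to `Y`
in the graph `G - S`. -/
def IsSep (G : SimpleGraph V) (S X Y : Set V) : Prop :=
  ∀ x ∈ X, ∀ y ∈ Y, ∀ p : G.Walk x y, ∃ s ∈ p.support, s ∈ S

/-- `S` is a minimal `(X,Y)`-separator of `G`. -/
def IsMinSep (G : SimpleGraph V) (S X Y : Set V) : Prop :=
  IsSep G S X Y ∧ ∀ S' ⊂ S, ¬ IsSep G S' X Y

/-- If a walk in `H` starts in `S` and ends outside `S`, and every vertex of `S`
other than `b` has all its `H`-neighbors in `S`, then the walk passes through `b`. -/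
private lemma walk_meets {H : SimpleGraph V} {S : Set V} {b : V}
    (hb : ∀ v ∈ S, v ≠ b → ∀ w, H.Adj v w → w ∈ S) :
    ∀ {v t : V} (p : H.Walk v t), v ∈ S → t ∉ S → b ∈ p.support := by
  intro v t p
  induction p with
  | nil => intro hv ht; exact absurd hv ht
  | @cons a c d h p ih =>
    intro hv ht
    by_cases hvb : a = b
    · rw [Walk.support_cons]; exact hvb ▸ List.mem_cons_self (a := a)
    · have hw : c ∈ S := hb a hv hvb c h
      rw [Walk.support_cons]; exact List.mem_cons_of_mem _ (ih hw ht)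

/-- A walk from inside `S` to outside `S` must contain an edge crossing `S`'s boundary. -/
private lemma exists_crossing {H : SimpleGraph V} {S : Set V} :
    ∀ {v t : V} (p : H.Walk v t), v ∈ S → t ∉ S →
      ∃ a b, a ∈ S ∧ b ∉ S ∧ H.Adj a b := by
  intro v t p
  induction p with
  | nil => intro hv ht; exact absurd hv ht
  | @cons a c d h p ih =>
    intro hv ht
    by_cases hw : c ∈ S
    · exact ih hw ht
    · exact ⟨a, c, hv, hw, h⟩

/-- Lemma 2 i). Here the paper's `u_1, ..., u_r` (`r ≥ 3`) is `u : Fin (r+3) → V`,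
`x_1, ..., x_p` (`p ≥ 1`) is `x : Fin (p+1) → V`, and `y_1, ..., y_q` (`q ≥ 1`)
is `y : Fin (q+1) → V`. -/
theorem minimal_separator_root_structure {r p q : ℕ}
    (G H : SimpleGraph V) (hG : G.Connected) (hH : IsSquareRoot H G)
    (u : Fin (r + 3) → V) (hu : Function.Injective u)
    (hclique : G.IsClique (Set.range u))
    (hsep : IsMinSep G {u 0, u 1} (u '' {i | 2 ≤ (i : ℕ)}) (Set.range u)ᶜ)
    (x : Fin (p + 1) → V) (hx : Function.Injective x)
    (hxr : Set.range x = G.neighborSet (u 0) \ Set.range u)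
    (y : Fin (q + 1) → V) (hy : Function.Injective y)
    (hyr : Set.range y = G.neighborSet (u 1) \ Set.range u) :
    H.Adj (u 0) (u 1) ∧
      (((∀ i : Fin (r + 3), 2 ≤ (i : ℕ) → H.Adj (u i) (u 0)) ∧
        (∀ i : Fin (r + 3), 2 ≤ (i : ℕ) → ¬ H.Adj (u i) (u 1)) ∧
        (∀ j, ¬ H.Adj (u 0) (x j)) ∧
        IsMinSep H {u 1} (insert (u 0) (u '' {i | 2 ≤ (i : ℕ)})) (Set.range u)ᶜ) ∨
       ((∀ i : Fin (r + 3), 2 ≤ (i : ℕ) → ¬ H.Adj (u i) (u 0)) ∧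
        (∀ i : Fin (r + 3), 2 ≤ (i : ℕ) → H.Adj (u i) (u 1)) ∧
        (∀ j, ¬ H.Adj (u 1) (y j)) ∧
        IsMinSep H {u 0} (u '' {i | 1 ≤ (i : ℕ)}) (Set.range u)ᶜ)) := by
  have hsq : ∀ v w : V, G.Adj v w ↔ v ≠ w ∧ (H.Adj v w ∨ ∃ m, H.Adj v m ∧ H.Adj m w) := by
    intro v w; rw [← hH]; exact Iff.rfl
  have hHG : ∀ {v w : V}, H.Adj v w → G.Adj v w :=
    fun h => (hsq _ _).mpr ⟨h.ne, Or.inl h⟩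
  have hG2 : ∀ {v m w : V}, H.Adj v m → H.Adj m w → v ≠ w → G.Adj v w :=
    fun h1 h2 hne => (hsq _ _).mpr ⟨hne, Or.inr ⟨_, h1, h2⟩⟩
  have hv0 : ((0 : Fin (r+3)) : ℕ) = 0 := rfl
  have hv1 : ((1 : Fin (r+3)) : ℕ) = 1 := by simp
  have hune : ∀ i j : Fin (r+3), (i : ℕ) ≠ (j : ℕ) → u i ≠ u j := by
    intro i j hij h; exact hij (congrArg Fin.val (hu h))
  have hadjidx : ∀ i j : Fin (r+3), (i : ℕ) ≠ (j : ℕ) → G.Adj (u i) (u j) :=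
    fun i j hij => hclique ⟨i, rfl⟩ ⟨j, rfl⟩ (hune i j hij)
  have hnem : ∀ (i : Fin (r+3)) z, z ∉ Set.range u → u i ≠ z :=
    fun i z hz h => hz ⟨i, h⟩
  -- Vertices `u i` with `2 ≤ i` have no `G`-neighbors outside `range u`.
  have hXno : ∀ i : Fin (r+3), 2 ≤ (i : ℕ) → ∀ z, z ∉ Set.range u → ¬ G.Adj (u i) z := by
    intro i hi z hz hadjz
    obtain ⟨s, hs, hsS⟩ := hsep.1 (u i) ⟨i, hi, rfl⟩ z hz hadjz.toWalk
    simp only [Adj.toWalk, Walk.support_cons, Walk.support_nil, List.mem_cons,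
      List.mem_singleton, List.not_mem_nil, or_false] at hs
    rcases hs with rfl | rfl
    · rcases hsS with h | h
      · exact hune i 0 (by rw [hv0]; omega) h
      · exact hune i 1 (by rw [hv1]; omega) h
    · rcases hsS with h | h
      · exact hz ⟨0, h.symm⟩
      · exact hz ⟨1, h.symm⟩
  have hNr : ∀ i : Fin (r+3), 2 ≤ (i : ℕ) → ∀ z, G.Adj (u i) z → z ∈ Set.range u := by
    intro i hi z h
    by_contra hz; exact hXno i hi z hz h
  -- Not both `u 0` and `u 1` have `H`-neighbors outside `range u`.
  have hNB : ¬ ((∃ z, z ∉ Set.range u ∧ H.Adj (u 0) z) ∧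
      (∃ z, z ∉ Set.range u ∧ H.Adj (u 1) z)) := by
    rintro ⟨⟨x', hx', hax'⟩, ⟨y', hy', hby'⟩⟩
    have hi2 : (2 : ℕ) ≤ ((⟨2, by omega⟩ : Fin (r+3)) : ℕ) := le_refl 2
    set i2 : Fin (r+3) := ⟨2, by omega⟩
    have hGa : G.Adj (u i2) (u 0) := hadjidx i2 0 (by rw [hv0]; exact two_ne_zero)
    rcases (hsq _ _).mp hGa with ⟨_, hca | ⟨w, h1, h2⟩⟩
    · exact hXno i2 hi2 x' hx' (hG2 hca hax' (hnem i2 x' hx'))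
    · obtain ⟨j, rfl⟩ := hNr i2 hi2 w (hHG h1)
      by_cases hj : 2 ≤ (j : ℕ)
      · exact hXno j hj x' hx' (hG2 h2 hax' (hnem j x' hx'))
      · rcases (show (j : ℕ) = 0 ∨ (j : ℕ) = 1 by omega) with h0 | h0
        · have hj0 : j = 0 := Fin.val_injective (by rw [hv0, h0])
          rw [hj0] at h2; exact h2.ne rfl
        · have hj1 : j = 1 := Fin.val_injective (by rw [hv1, h0])
          rw [hj1] at h1
          exact hXno i2 hi2 y' hy' (hG2 h1 hby' (hnem i2 y' hy'))
  -- `H` inherits reachability from `G`.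
  have hreach : ∀ v w : V, G.Reachable v w → H.Reachable v w := by
    intro v w hr
    obtain ⟨pw⟩ := hr
    induction pw with
    | nil => exact Reachable.refl _
    | @cons a c d h pw ih =>
      have hac : H.Reachable a c := by
        rcases (hsq _ _).mp h with ⟨_, he | ⟨m, h1, h2⟩⟩
        · exact he.reachable
        · exact (h1.reachable).trans h2.reachable
      exact hac.trans ih
  have hxprop : ∀ j, G.Adj (u 0) (x j) ∧ x j ∉ Set.range u := by
    intro j
    have := Set.mem_range_self (f := x) j
    rw [hxr] at this
    exact ⟨this.1, this.2⟩
  have hyprop : ∀ j, G.Adj (u 1) (y j) ∧ y j ∉ Set.range u := by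
    intro j
    have := Set.mem_range_self (f := y) j
    rw [hyr] at this
    exact ⟨this.1, this.2⟩
  -- At least one of `u 0`, `u 1` has an `H`-neighbor outside `range u`.
  have hAorB : (∃ z, z ∉ Set.range u ∧ H.Adj (u 0) z) ∨
      (∃ z, z ∉ Set.range u ∧ H.Adj (u 1) z) := by
    obtain ⟨pw⟩ := hreach (u 0) (x 0) (hG.preconnected (u 0) (x 0))
    obtain ⟨a', b', ha', hb', hab'⟩ := exists_crossing (S := Set.range u) pw ⟨0, rfl⟩ (hxprop 0).2
    obtain ⟨j, rfl⟩ := ha'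
    by_cases hj : 2 ≤ (j : ℕ)
    · exact absurd (hHG hab') (hXno j hj b' hb')
    · rcases (show (j : ℕ) = 0 ∨ (j : ℕ) = 1 by omega) with h0 | h0
      · have hj0 : j = 0 := Fin.val_injective (by rw [hv0, h0])
        rw [hj0] at hab'
        exact Or.inl ⟨b', hb', hab'⟩
      · have hj1 : j = 1 := Fin.val_injective (by rw [hv1, h0])
        rw [hj1] at hab'
        exact Or.inr ⟨b', hb', hab'⟩
  by_cases hA : ∃ z, z ∉ Set.range u ∧ H.Adj (u 0) z
  · -- Case (b): `u 0` has an `H`-neighbor outside.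
    have hnB : ¬ ∃ z, z ∉ Set.range u ∧ H.Adj (u 1) z := fun hB => hNB ⟨hA, hB⟩
    obtain ⟨x', hx', hax'⟩ := hA
    have h1b : ∀ i : Fin (r+3), 2 ≤ (i : ℕ) → ¬ H.Adj (u i) (u 0) := by
      intro i hi h
      exact hXno i hi x' hx' (hG2 h hax' (hnem i x' hx'))
    have h2b : ∀ i : Fin (r+3), 2 ≤ (i : ℕ) → H.Adj (u i) (u 1) := by
      intro i hi
      have hGa : G.Adj (u i) (u 0) := hadjidx i 0 (by rw [hv0]; omega)
      rcases (hsq _ _).mp hGa with ⟨_, h | ⟨w, hw1, hw2⟩⟩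
      · exact absurd h (h1b i hi)
      · obtain ⟨j, rfl⟩ := hNr i hi w (hHG hw1)
        by_cases hj : 2 ≤ (j : ℕ)
        · exact absurd hw2 (h1b j hj)
        · rcases (show (j : ℕ) = 0 ∨ (j : ℕ) = 1 by omega) with h0 | h0
          · have hj0 : j = 0 := Fin.val_injective (by rw [hv0, h0])
            rw [hj0] at hw2; exact absurd rfl hw2.ne
          · have hj1 : j = 1 := Fin.val_injective (by rw [hv1, h0])
            rwa [hj1] at hw1
    have h3b : ∀ j, ¬ H.Adj (u 1) (y j) := by
      intro j h
      exact hnB ⟨y j, (hyprop j).2, h⟩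
    have hab : H.Adj (u 0) (u 1) := by
      have hG01 : G.Adj (u 0) (u 1) := hadjidx 0 1 (by rw [hv0, hv1]; omega)
      rcases (hsq _ _).mp hG01 with ⟨_, h | ⟨w, hw1, hw2⟩⟩
      · exact h
      · by_cases hw : w ∈ Set.range u
        · obtain ⟨j, rfl⟩ := hw
          by_cases hj : 2 ≤ (j : ℕ)
          · exact absurd hw1.symm (h1b j hj)
          · rcases (show (j : ℕ) = 0 ∨ (j : ℕ) = 1 by omega) with h0 | h0
            · have hj0 : j = 0 := Fin.val_injective (by rw [hv0, h0])
              rw [hj0] at hw1; exact absurd rfl hw1.ne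
            · have hj1 : j = 1 := Fin.val_injective (by rw [hv1, h0])
              rwa [hj1] at hw1
        · exact absurd ⟨w, hw, hw2.symm⟩ hnB
    have hsepb : IsSep H {u 0} (u '' {i | 1 ≤ (i : ℕ)}) (Set.range u)ᶜ := by
      intro v hv t ht pw
      have hvr : v ∈ Set.range u := by obtain ⟨i, _, rfl⟩ := hv; exact ⟨i, rfl⟩
      have hb : ∀ w ∈ Set.range u, w ≠ u 0 → ∀ z, H.Adj w z → z ∈ Set.range u := by
        rintro w ⟨j, rfl⟩ hwne z hz
        by_cases hj : 2 ≤ (j : ℕ)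
        · exact hNr j hj z (hHG hz)
        · rcases (show (j : ℕ) = 0 ∨ (j : ℕ) = 1 by omega) with h0 | h0
          · have hj0 : j = 0 := Fin.val_injective (by rw [hv0, h0])
            exact absurd (congrArg u hj0) hwne
          · have hj1 : j = 1 := Fin.val_injective (by rw [hv1, h0])
            by_contra hzr
            exact hnB ⟨z, hzr, by rwa [hj1] at hz⟩
      exact ⟨u 0, walk_meets hb pw hvr ht, Set.mem_singleton _⟩
    have hminb : IsMinSep H {u 0} (u '' {i | 1 ≤ (i : ℕ)}) (Set.range u)ᶜ := by
      refine ⟨hsepb, ?_⟩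
      intro S' hS' hsep'
      have hS'e : S' = ∅ := by
        rcases Set.subset_singleton_iff_eq.mp hS'.subset with h | h
        · exact h
        · exact absurd h hS'.ne
      subst hS'e
      have hmem1 : u 1 ∈ u '' {i | 1 ≤ (i : ℕ)} := ⟨1, by rw [Set.mem_setOf_eq, hv1], rfl⟩
      obtain ⟨s, _, hs⟩ := hsep' (u 1) hmem1 x' hx'
        (Walk.cons hab.symm (Walk.cons hax' Walk.nil))
      exact hs
    exact ⟨hab, Or.inr ⟨h1b, h2b, h3b, hminb⟩⟩
  · -- Case (a): `u 0` has no `H`-neighbor outside, but `u 1` does.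
    have hB := hAorB.resolve_left hA
    obtain ⟨y', hy', hby'⟩ := hB
    have h2a : ∀ i : Fin (r+3), 2 ≤ (i : ℕ) → ¬ H.Adj (u i) (u 1) := by
      intro i hi h
      exact hXno i hi y' hy' (hG2 h hby' (hnem i y' hy'))
    have h1a : ∀ i : Fin (r+3), 2 ≤ (i : ℕ) → H.Adj (u i) (u 0) := by
      intro i hi
      have hGa : G.Adj (u i) (u 1) := hadjidx i 1 (by rw [hv1]; omega)
      rcases (hsq _ _).mp hGa with ⟨_, h | ⟨w, hw1, hw2⟩⟩
      · exact absurd h (h2a i hi)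
      · obtain ⟨j, rfl⟩ := hNr i hi w (hHG hw1)
        by_cases hj : 2 ≤ (j : ℕ)
        · exact absurd hw2 (h2a j hj)
        · rcases (show (j : ℕ) = 0 ∨ (j : ℕ) = 1 by omega) with h0 | h0
          · have hj0 : j = 0 := Fin.val_injective (by rw [hv0, h0])
            rwa [hj0] at hw1
          · have hj1 : j = 1 := Fin.val_injective (by rw [hv1, h0])
            rw [hj1] at hw2; exact absurd rfl hw2.ne
    have h3a : ∀ j, ¬ H.Adj (u 0) (x j) := by
      intro j h
      exact hA ⟨x j, (hxprop j).2, h⟩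
    have hab : H.Adj (u 0) (u 1) := by
      have hG01 : G.Adj (u 0) (u 1) := hadjidx 0 1 (by rw [hv0, hv1]; omega)
      rcases (hsq _ _).mp hG01 with ⟨_, h | ⟨w, hw1, hw2⟩⟩
      · exact h
      · by_cases hw : w ∈ Set.range u
        · obtain ⟨j, rfl⟩ := hw
          by_cases hj : 2 ≤ (j : ℕ)
          · exact absurd hw2 (h2a j hj)
          · rcases (show (j : ℕ) = 0 ∨ (j : ℕ) = 1 by omega) with h0 | h0
            · have hj0 : j = 0 := Fin.val_injective (by rw [hv0, h0])
              rw [hj0] at hw1; exact absurd rfl hw1.ne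
            · have hj1 : j = 1 := Fin.val_injective (by rw [hv1, h0])
              rwa [hj1] at hw1
        · exact absurd ⟨w, hw, hw1⟩ hA
    have hsepa : IsSep H {u 1} (insert (u 0) (u '' {i | 2 ≤ (i : ℕ)})) (Set.range u)ᶜ := by
      intro v hv t ht pw
      have hvr : v ∈ Set.range u := by
        rcases hv with rfl | ⟨i, _, rfl⟩
        · exact ⟨0, rfl⟩
        · exact ⟨i, rfl⟩
      have hb : ∀ w ∈ Set.range u, w ≠ u 1 → ∀ z, H.Adj w z → z ∈ Set.range u := by
        rintro w ⟨j, rfl⟩ hwne z hz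
        by_cases hj : 2 ≤ (j : ℕ)
        · exact hNr j hj z (hHG hz)
        · rcases (show (j : ℕ) = 0 ∨ (j : ℕ) = 1 by omega) with h0 | h0
          · have hj0 : j = 0 := Fin.val_injective (by rw [hv0, h0])
            by_contra hzr
            exact hA ⟨z, hzr, by rwa [hj0] at hz⟩
          · have hj1 : j = 1 := Fin.val_injective (by rw [hv1, h0])
            exact absurd (congrArg u hj1) hwne
      exact ⟨u 1, walk_meets hb pw hvr ht, Set.mem_singleton _⟩
    have hmina : IsMinSep H {u 1} (insert (u 0) (u '' {i | 2 ≤ (i : ℕ)})) (Set.range u)ᶜ := by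
      refine ⟨hsepa, ?_⟩
      intro S' hS' hsep'
      have hS'e : S' = ∅ := by
        rcases Set.subset_singleton_iff_eq.mp hS'.subset with h | h
        · exact h
        · exact absurd h hS'.ne
      subst hS'e
      obtain ⟨s, _, hs⟩ := hsep' (u 0) (Set.mem_insert _ _) y' hy'
        (Walk.cons hab (Walk.cons hby' Walk.nil))
      exact hs
    exact ⟨hab, Or.inl ⟨h1a, h2a, h3a, hmina⟩⟩
end

section
/- Let u and v be true twins in a connected graph G with at least three vertices, and let G' be the graph obtained from G by deleting v. If H is a square root of G such that u and v are false twins in H, then the graph H' obtained from H by deleting v is a square root of G'. -/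
open SimpleGraph

variable {V : Type*}

/-- Lemma 5 ii): if `u, v` are true twins in a connected graph `G` with at least
three vertices, `H` is a square root of `G` in which `u, v` are false twins, and
`G'`, `H'` are obtained from `G`, `H` by deleting `v`, then `H'` is a square root
of `G'`. -/
theorem true_twin_delete_false_twin_root (G : SimpleGraph V) (u v : V) (huv : u ≠ v)
    (hG : G.Connected)
    (h3 : ∃ a b c : V, a ≠ b ∧ a ≠ c ∧ b ≠ c)
    (htw : TrueTwins G u v)
    (H : SimpleGraph V) (hroot : IsSquareRoot H G)
    (hft : H.neighborSet u = H.neighborSet v) :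
    IsSquareRoot (H.induce {w : V | w ≠ v}) (G.induce {w : V | w ≠ v}) := by
  subst hroot
  have hAdj : ∀ x y : V, H.Adj v x ↔ H.Adj u x := by
    intro x y
    constructor
    · intro h
      have : x ∈ H.neighborSet u := hft ▸ h
      exact this
    · intro h
      have : x ∈ H.neighborSet v := hft ▸ h
      exact this
  unfold IsSquareRoot
  ext ⟨a, ha⟩ ⟨b, hb⟩
  simp only [squareGraph, comap_adj, Function.Embedding.coe_subtype, induce,
    Subtype.mk_eq_mk, ne_eq, Set.mem_setOf_eq] at *
  constructor
  · rintro ⟨hne, h | ⟨⟨w, hw⟩, h1, h2⟩⟩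
    · exact ⟨fun e => hne e, Or.inl h⟩
    · exact ⟨fun e => hne e, Or.inr ⟨w, h1, h2⟩⟩
  · rintro ⟨hne, h | ⟨w, h1, h2⟩⟩
    · exact ⟨fun e => hne (by simpa using e), Or.inl h⟩
    · by_cases hwv : w = v
      · subst hwv
        have h1' : H.Adj u a := ((hAdj a a).mp h1.symm)
        have h2' : H.Adj u b := ((hAdj b b).mp h2)
        have hua : u ≠ a := fun e => H.loopless.irrefl a (e ▸ h1')
        have hub : u ≠ b := fun e => H.loopless.irrefl b (e ▸ h2')
        exact ⟨fun e => hne (by simpa using e),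
          Or.inr ⟨⟨u, huv⟩, h1'.symm, h2'⟩⟩
      · exact ⟨fun e => hne (by simpa using e), Or.inr ⟨⟨w, hwv⟩, h1, h2⟩⟩
end
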